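/- Let G be a linearly ordered abelian group equipped with its order topology. If G is connected as a topological space, then G is divisible: for every x ∈ G and every positive integer n there exists y ∈ G with n·y = x. -/

import Mathlib

/-- A linearly ordered abelian group which is connected in its order topology is
divisible. -/
theorem stmt_13 {G : Type*} [AddCommGroup G] [LinearOrder G] [IsOrderedAddMonoid G] [TopologicalSpace G]
    [OrderTopology G] (hconn : ConnectedSpace G) :
    ∀ x : G, ∀ n : ℕ, 0 < n → ∃ y : G, n • y = x := by
  have key : ∀ x : G, 0 ≤ x → ∀ n : ℕ, 0 < n → ∃ y : G, n • y = x := by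
    intro x hx n hn
    have hf : Continuous fun y : G => n • y := by
      continuity
    have hmem : x ∈ Set.Icc ((fun y : G => n • y) 0) ((fun y : G => n • y) x) := by
      simp only [smul_zero]
      refine ⟨hx, ?_⟩
      calc x = 1 • x := (one_nsmul x).symm
        _ ≤ n • x := nsmul_le_nsmul_left hx hn
    obtain ⟨y, hy⟩ := intermediate_value_univ (0 : G) x hf hmem
    exact ⟨y, hy⟩
  intro x n hn
  rcases le_total 0 x with hx | hx
  · exact key x hx n hn
  · obtain ⟨y, hy⟩ := key (-x) (neg_nonneg.mpr hx) n hn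
    exact ⟨-y, by rw [smul_neg, hy, neg_neg]⟩
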